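/- arXiv:1904.12900 — 8 statements merged into one kernel-verified Lean document; each statement's English description precedes it below -/
import Mathlib

section
/- Define a(t) = 1/(2 + 0.5^(⌊t⌋-2)) and h(t) = ⌊t⌋ - 0.5^⌊t⌋·(1 - {t}) for t ≥ 1, where ⌊t⌋ is the floor and {t} = t - ⌊t⌋ the fractional part. Then x(t) = (1 + 0.5^⌊t⌋)·(1 - {t}) satisfies x(t+1) - x(t) + a(t)·x(h(t)) = 0 for all t ≥ 1. Moreover a(t) ≥ 1/4 for all t ≥ 1, and x(n) > 1 for every integer n ≥ 1, so x does not tend to 0. -/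
/-- Example 1: with `a(t) = 1/(2 + 0.5^(⌊t⌋-2))` and
`h(t) = ⌊t⌋ - 0.5^⌊t⌋·(1 - {t})`, the function
`x(t) = (1 + 0.5^⌊t⌋)·(1 - {t})` solves `x(t+1) - x(t) + a(t)·x(h(t)) = 0`
for `t ≥ 1`; moreover `a(t) ≥ 1/4` and `x(n) > 1` for integers `n ≥ 1`. -/
theorem stmt_0 (a h x : ℝ → ℝ)
    (ha : ∀ t : ℝ, a t = 1 / (2 + (0.5 : ℝ) ^ (⌊t⌋ - 2)))
    (hh : ∀ t : ℝ, h t = (⌊t⌋ : ℝ) - (0.5 : ℝ) ^ ⌊t⌋ * (1 - Int.fract t))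
    (hx : ∀ t : ℝ, x t = (1 + (0.5 : ℝ) ^ ⌊t⌋) * (1 - Int.fract t)) :
    (∀ t : ℝ, 1 ≤ t → x (t + 1) - x t + a t * x (h t) = 0) ∧
    (∀ t : ℝ, 1 ≤ t → (1 : ℝ) / 4 ≤ a t) ∧
    (∀ n : ℤ, 1 ≤ n → 1 < x n) := by
  have h05 : (0:ℝ) < 0.5 := by norm_num
  refine ⟨?_, ?_, ?_⟩
  · intro t ht
    set n := ⌊t⌋ with hn
    have hn1 : (1:ℤ) ≤ n := Int.le_floor.mpr (by exact_mod_cast ht)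
    set f := Int.fract t with hf
    have hf0 : 0 ≤ f := Int.fract_nonneg t
    have hf1 : f < 1 := Int.fract_lt_one t
    have hpow0 : (0:ℝ) < (0.5:ℝ) ^ n := zpow_pos h05 n
    have hpowle : (0.5:ℝ) ^ n ≤ (0.5:ℝ) ^ (1:ℤ) :=
      zpow_le_zpow_right_of_le_one₀ (by norm_num) (by norm_num) hn1
    have hc0 : (0:ℝ) < (0.5:ℝ) ^ n * (1 - f) := by
      apply mul_pos hpow0; linarith
    have hc1 : (0.5:ℝ) ^ n * (1 - f) ≤ 1 := by
      have : (0.5:ℝ) ^ n * (1 - f) ≤ (0.5:ℝ) ^ n * 1 :=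
        mul_le_mul_of_nonneg_left (by linarith) hpow0.le
      have h2 : (0.5:ℝ) ^ (1:ℤ) = 0.5 := by norm_num
      nlinarith
    -- floor and fract of h t
    have hfloorh : ⌊h t⌋ = n - 1 := by
      rw [hh t, ← hn, ← hf]
      rw [Int.floor_eq_iff]
      push_cast
      constructor <;> linarith
    have hfracth : Int.fract (h t) = 1 - (0.5:ℝ) ^ n * (1 - f) := by
      rw [Int.fract, hfloorh, hh t, ← hn, ← hf]
      push_cast
      ring
    have hfloor1 : ⌊t + 1⌋ = n + 1 := by rw [hn]; exact_mod_cast Int.floor_add_one t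
    have hfract1 : Int.fract (t + 1) = f := by
      rw [hf]; exact_mod_cast Int.fract_add_intCast t 1
    rw [hx (t+1), hx t, hx (h t), ha t, hfloorh, hfracth, hfloor1, hfract1, ← hn, ← hf]
    have e1 : (0.5:ℝ) ^ (n+1) = (0.5:ℝ) ^ n * 0.5 := by
      rw [zpow_add_one₀ (by norm_num)]
    have e2 : (0.5:ℝ) ^ (n-1) = (0.5:ℝ) ^ n * 2 := by
      rw [zpow_sub_one₀ (by norm_num)]; norm_num
    have e3 : (0.5:ℝ) ^ (n-2) = (0.5:ℝ) ^ n * 4 := by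
      rw [show n - 2 = n - 1 - 1 by ring, zpow_sub_one₀ (by norm_num), e2]; ring
    rw [e1, e2, e3]
    have hden : (2:ℝ) + (0.5:ℝ) ^ n * 4 ≠ 0 := by positivity
    field_simp
    ring
  · intro t ht
    have hn1 : (1:ℤ) ≤ ⌊t⌋ := Int.le_floor.mpr (by exact_mod_cast ht)
    rw [ha t]
    have hpow0 : (0:ℝ) < (0.5:ℝ) ^ (⌊t⌋ - 2) := zpow_pos h05 _
    have hle : (0.5:ℝ) ^ (⌊t⌋ - 2) ≤ (0.5:ℝ) ^ (-1:ℤ) :=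
      zpow_le_zpow_right_of_le_one₀ (by norm_num) (by norm_num) (by omega)
    have : (0.5:ℝ) ^ (-1:ℤ) = 2 := by norm_num
    rw [this] at hle
    rw [div_le_div_iff₀ (by norm_num) (by linarith)]
    linarith
  · intro n hn
    rw [hx n, Int.floor_intCast, Int.fract_intCast]
    have hpow0 : (0:ℝ) < (0.5:ℝ) ^ n := zpow_pos h05 n
    nlinarith
end

section
/- For every M > 0 there exist a constant coefficient a ≥ M and a function h : ℝ → ℝ with h(t) < t for all t, such that the equation x(t+1) - x(t) + a·x(h(t)) = 0 has a positive solution. Concretely, choose k ∈ ℕ with 2^k ≥ M, set a = 2^k and h(t) = ⌊t⌋ - 2^(-k-2)·(1 - {t}); then x(t) = 2^(-⌊t⌋)·(1 - {t}) is a positive solution (positive for t not an integer, nonnegative everywhere, and solves the equation wherever defined). -/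
/-- Theorem 1 (first part): for every `M > 0` there exist a constant
coefficient `a ≥ M` and a delayed argument `h(t) < t` such that
`x(t+1) - x(t) + a·x(h(t)) = 0` has a nonnegative solution which is
positive at every non-integer point; concretely `a = 2^k` with `2^k ≥ M`,
`h(t) = ⌊t⌋ - 2^(-k-2)·(1-{t})`, `x(t) = 2^(-⌊t⌋)·(1-{t})`. -/
theorem stmt_1 (M : ℝ) (hM : 0 < M) :
    ∃ (a : ℝ) (h x : ℝ → ℝ),
      M ≤ a ∧ (∀ t : ℝ, h t < t) ∧
      (∀ t : ℝ, 0 ≤ x t) ∧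
      (∀ t : ℝ, Int.fract t ≠ 0 → 0 < x t) ∧
      (∀ t : ℝ, x (t + 1) - x t + a * x (h t) = 0) ∧
      ∃ k : ℕ, M ≤ (2 : ℝ) ^ k ∧ a = (2 : ℝ) ^ k ∧
        (∀ t : ℝ, h t = (⌊t⌋ : ℝ) - (2 : ℝ) ^ (-(k : ℤ) - 2) * (1 - Int.fract t)) ∧
        (∀ t : ℝ, x t = (2 : ℝ) ^ (-⌊t⌋) * (1 - Int.fract t)) := by
  obtain ⟨k, hk⟩ := pow_unbounded_of_one_lt M (one_lt_two (α := ℝ))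
  have hk' : M ≤ (2 : ℝ) ^ k := hk.le
  have h2 : (0 : ℝ) < 2 := two_pos
  have h2' : (2 : ℝ) ≠ 0 := two_ne_zero
  set ε : ℝ := (2 : ℝ) ^ (-(k : ℤ) - 2) with hε
  have hεpos : 0 < ε := zpow_pos h2 _
  have hεle : ε ≤ 1/4 := by
    have : ε ≤ (2:ℝ) ^ (-2 : ℤ) := by
      apply zpow_le_zpow_right₀ (by norm_num)
      omega
    simpa using this.trans_eq (by norm_num)
  refine ⟨(2 : ℝ) ^ k,
    fun t => (⌊t⌋ : ℝ) - ε * (1 - Int.fract t),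
    fun t => (2 : ℝ) ^ (-⌊t⌋) * (1 - Int.fract t),
    hk', ?_, ?_, ?_, ?_, k, hk', rfl, fun t => rfl, fun t => rfl⟩
  · intro t
    beta_reduce
    have hf0 := Int.fract_nonneg t
    have hf1 := Int.fract_lt_one t
    have hft : (⌊t⌋ : ℝ) = t - Int.fract t := by
      rw [Int.self_sub_fract]
    rw [hft]
    nlinarith [mul_pos hεpos (by linarith : (0:ℝ) < 1 - Int.fract t)]
  · intro t
    have hf1 := Int.fract_lt_one t
    exact le_of_lt (mul_pos (zpow_pos h2 _) (by linarith))
  · intro t _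
    have hf1 := Int.fract_lt_one t
    exact mul_pos (zpow_pos h2 _) (by linarith)
  · intro t
    beta_reduce
    have hf0 := Int.fract_nonneg t
    have hf1 := Int.fract_lt_one t
    set f := Int.fract t with hf
    set m := ⌊t⌋ with hm
    have hδ0 : 0 < ε * (1 - f) := mul_pos hεpos (by linarith)
    have hδ1 : ε * (1 - f) < 1 := by nlinarith
    -- floor and fract of t+1
    have hfl1 : ⌊t + 1⌋ = m + 1 := by
      rw [hm]; exact_mod_cast Int.floor_add_one t
    have hfr1 : Int.fract (t + 1) = f := by
      rw [hf]; exact_mod_cast Int.fract_add_one t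
    -- floor and fract of h t
    have hfl2 : ⌊(m : ℝ) - ε * (1 - f)⌋ = m - 1 := by
      rw [Int.floor_eq_iff]
      constructor
      · push_cast; linarith
      · push_cast; linarith
    have hfr2 : Int.fract ((m : ℝ) - ε * (1 - f)) = 1 - ε * (1 - f) := by
      rw [Int.fract, hfl2]; push_cast; ring
    rw [hfl1, hfr1, hfl2, hfr2]
    have e1 : (2:ℝ) ^ (-(m + 1)) = (2:ℝ) ^ (-m) / 2 := by
      rw [neg_add, zpow_add₀ h2']; norm_num; ring
    have e2 : (2:ℝ) ^ (-(m - 1)) = (2:ℝ) ^ (-m) * 2 := by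
      rw [neg_sub, sub_eq_add_neg, zpow_add₀ h2']; norm_num; ring
    have e3 : (2:ℝ) ^ k * ε = 1/4 := by
      rw [hε, ← zpow_natCast (2:ℝ) k, ← zpow_add₀ h2',
        show (k:ℤ) + (-(k:ℤ) - 2) = -2 by ring]
      norm_num
    rw [e1, e2]
    linear_combination (2 * (2:ℝ) ^ (-m) * (1 - f)) * e3
end

section
/- Fix a = 1/4 and let n ∈ ℕ be arbitrary. Define h(t) = ⌊t⌋ - n - 2^(-n)·(1 - {t}), so that h(t) < t - n for all t. Then x(t) = 2^(-⌊t⌋)·(1 - {t}) satisfies x(t+1) - x(t) + (1/4)·x(h(t)) = 0 for all t. Hence for the fixed coefficient 1/4 and arbitrarily large delay bound n, a nonnegative (non-oscillatory) solution exists. -/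
/-- Theorem 1 (second part): for the fixed coefficient `a = 1/4` and any
`n ∈ ℕ`, with `h(t) = ⌊t⌋ - n - 2^(-n)·(1-{t})` one has `h(t) < t - n`
and `x(t) = 2^(-⌊t⌋)·(1-{t})` is a nonnegative solution of
`x(t+1) - x(t) + (1/4)·x(h(t)) = 0`. -/
theorem stmt_2 (n : ℕ) (h x : ℝ → ℝ)
    (hh : ∀ t : ℝ, h t = (⌊t⌋ : ℝ) - n - (2 : ℝ) ^ (-(n : ℤ)) * (1 - Int.fract t))
    (hx : ∀ t : ℝ, x t = (2 : ℝ) ^ (-⌊t⌋) * (1 - Int.fract t)) :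
    (∀ t : ℝ, h t < t - n) ∧
    (∀ t : ℝ, x (t + 1) - x t + (1 / 4 : ℝ) * x (h t) = 0) ∧
    (∀ t : ℝ, 0 ≤ x t) := by
  have hc : ∀ t : ℝ, 0 < (2 : ℝ) ^ (-(n : ℤ)) * (1 - Int.fract t) ∧
      (2 : ℝ) ^ (-(n : ℤ)) * (1 - Int.fract t) ≤ 1 := by
    intro t
    have h1 : Int.fract t < 1 := Int.fract_lt_one t
    have h0 : 0 ≤ Int.fract t := Int.fract_nonneg t
    have hp : (0 : ℝ) < (2 : ℝ) ^ (-(n : ℤ)) := by positivity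
    constructor
    · have : 0 < 1 - Int.fract t := by linarith
      positivity
    · have hle : (2 : ℝ) ^ (-(n : ℤ)) ≤ 1 := by
        apply zpow_le_one_of_nonpos₀ (by norm_num)
        simp
      calc (2 : ℝ) ^ (-(n : ℤ)) * (1 - Int.fract t) ≤ 1 * 1 := by
            apply mul_le_mul hle (by linarith) (by linarith) (by norm_num)
        _ = 1 := by ring
  have hfloor : ∀ t : ℝ, ⌊h t⌋ = ⌊t⌋ - n - 1 := by
    intro t
    obtain ⟨hc0, hc1⟩ := hc t
    rw [hh t]
    rw [Int.floor_eq_iff]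
    push_cast
    constructor <;> linarith
  have hfract : ∀ t : ℝ, Int.fract (h t) = 1 - (2 : ℝ) ^ (-(n : ℤ)) * (1 - Int.fract t) := by
    intro t
    rw [Int.fract, hfloor t, hh t]
    push_cast
    ring
  refine ⟨?_, ?_, ?_⟩
  · intro t
    obtain ⟨hc0, _⟩ := hc t
    have : (⌊t⌋ : ℝ) ≤ t := Int.floor_le t
    rw [hh t]; linarith
  · intro t
    rw [hx (t + 1), hx t, hx (h t), hfract t, hfloor t]
    rw [Int.fract_add_one, Int.floor_add_one]
    have e1 : (2 : ℝ) ^ (-(⌊t⌋ + 1)) = (2 : ℝ) ^ (-⌊t⌋) / 2 := by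
      rw [neg_add, zpow_add₀ (by norm_num : (2:ℝ) ≠ 0)]
      norm_num
      ring
    have e2 : (2 : ℝ) ^ (-(⌊t⌋ - (n : ℤ) - 1)) =
        (2 : ℝ) ^ (-⌊t⌋) * (2 : ℝ) ^ (n : ℤ) * 2 := by
      rw [show -(⌊t⌋ - (n : ℤ) - 1) = -⌊t⌋ + (n : ℤ) + 1 by ring,
        zpow_add₀ (by norm_num : (2:ℝ) ≠ 0), zpow_add₀ (by norm_num : (2:ℝ) ≠ 0)]
      norm_num
    have e3 : (2 : ℝ) ^ ((n : ℤ)) * (2 : ℝ) ^ (-(n : ℤ)) = 1 := by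
      rw [← zpow_add₀ (by norm_num : (2:ℝ) ≠ 0)]; simp
    rw [e1, e2]
    linear_combination ((1/2) * (2:ℝ) ^ (-⌊t⌋) * (1 - Int.fract t)) * e3
  · intro t
    rw [hx t]
    have h1 : Int.fract t < 1 := Int.fract_lt_one t
    have : 0 < 1 - Int.fract t := by linarith
    positivity
end

section
/- The discrete delay difference equation y(n+1) - y(n) + q·y(n-1) = 0 with constant q > 1/4 has no eventually positive solution; i.e., every solution oscillates. -/
/-- The discrete equation `y(n+1) - y(n) + q·y(n-1) = 0` with constant
`q > 1/4` has no eventually positive solution. -/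
theorem stmt_6 (q : ℝ) (hq : 1 / 4 < q) :
    ¬ ∃ y : ℤ → ℝ, (∃ N : ℤ, ∀ n : ℤ, N ≤ n → 0 < y n) ∧
      (∀ n : ℤ, y (n + 1) - y n + q * y (n - 1) = 0) := by
  rintro ⟨y, ⟨N, hpos⟩, heq⟩
  obtain ⟨ε, hε⟩ : ∃ ε : ℝ, ε = q - 1/4 := ⟨_, rfl⟩
  have hε0 : 0 < ε := by rw [hε]; linarith
  have key : ∀ k : ℕ, ∀ n : ℤ, N + 1 + k ≤ n → y (n + 1) ≤ (1 - k * ε) * y n := by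
    intro k
    induction k with
    | zero =>
      intro n hn
      have h1 := heq n
      have h2 : 0 < y (n - 1) := hpos _ (by omega)
      push_cast
      nlinarith
    | succ k ih =>
      intro n hn
      have h1 := heq n
      have hy1 : 0 < y (n - 1) := hpos _ (by omega)
      have hy0 : 0 < y n := hpos _ (by omega)
      have hih : y n ≤ (1 - k * ε) * y (n - 1) := by
        have := ih (n - 1) (by omega)
        simpa using this
      have hc : 0 < 1 - k * ε := by
        rcases le_or_gt (1 - k * ε) 0 with h | h
        · exfalso
          nlinarith
        · exact h
      have hcoef : ((k : ℝ) + 1) * ε * (1 - k * ε) ≤ q := by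
        nlinarith [sq_nonneg (2 * ((k : ℝ) * ε) - 1),
          mul_nonneg hε0.le (mul_nonneg (Nat.cast_nonneg k : (0:ℝ) ≤ k) hε0.le)]
      have h4 : ((k : ℝ) + 1) * ε * y n ≤ ((k : ℝ) + 1) * ε * ((1 - k * ε) * y (n - 1)) :=
        mul_le_mul_of_nonneg_left hih (by positivity)
      have h5 : ((k : ℝ) + 1) * ε * (1 - k * ε) * y (n - 1) ≤ q * y (n - 1) :=
        mul_le_mul_of_nonneg_right hcoef hy1.le
      push_cast
      nlinarith
  obtain ⟨k, hk⟩ : ∃ k : ℕ, 1 - (k : ℝ) * ε < 0 := by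
    obtain ⟨k, hk⟩ := exists_nat_gt (1 / ε)
    refine ⟨k, ?_⟩
    have : 1 < (k : ℝ) * ε := by
      rw [div_lt_iff₀ hε0] at hk
      linarith
    linarith
  have h1 := key k (N + 1 + k) le_rfl
  have h2 := hpos (N + 1 + k + 1) (by omega)
  have h3 := hpos (N + 1 + k) (by omega)
  nlinarith
end

section
/- Let a_k : ℝ → ℝ≥0 and h_k(t) ≤ t, k = 1,…,m. Define a_k⁺(n) = sup_{[n,n+1)} a_k, a_k⁻(n) = inf_{[n,n+1)} a_k, h_k⁺(n) = sup_{[n,n+1)} ⌊h_k⌋, h_k⁻(n) = inf_{[n,n+1)} ⌊h_k⌋. Suppose there exist positive non-increasing sequences u(n), V(n), n ∈ ℤ, with u(n) ≤ V(n) for n ≥ 0, u(n+1) ≤ u(n) - Σ_k a_k⁺(n)·V(h_k⁻(n)) and V(n+1) ≥ V(n) - Σ_k a_k⁻(n)·u(h_k⁺(n)) for n ≥ 0. Then the solution x of x(t+1) - x(t) + Σ_k a_k(t)·x(h_k(t)) = 0 with initial function x(t) = u(⌊t⌋) = V(⌊t⌋) for t < 1 (where u(n) = V(n) for n ≤ 0)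 satisfies u(n) ≤ x(t) ≤ V(n) for t ∈ [n,n+1), n ≥ 0; in particular x is a positive solution with positive infimum on every bounded interval. -/
/-- Theorem 3 (sandwich existence): if positive non-increasing sequences
`u ≤ V` satisfy `u(n+1) ≤ u(n) - Σ_k a_k⁺(n)·V(h_k⁻(n))` and
`V(n+1) ≥ V(n) - Σ_k a_k⁻(n)·u(h_k⁺(n))`, then the solution of
`x(t+1) - x(t) + Σ_k a_k(t)·x(h_k(t)) = 0` with initial function
`x(t) = u(⌊t⌋) = V(⌊t⌋)`, `t < 1`, satisfies `u(n) ≤ x(t) ≤ V(n)` on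
`[n,n+1)`; in particular it is positive with positive infimum on every
bounded interval. -/
theorem stmt_7 (m : ℕ) (a h : Fin m → ℝ → ℝ) (x : ℝ → ℝ) (u V : ℤ → ℝ)
    (ha : ∀ k t, 0 ≤ a k t) (hht : ∀ k (t : ℝ), h k t ≤ t)
    (aH aL : Fin m → ℕ → ℝ) (hL hH : Fin m → ℕ → ℤ)
    (haH : ∀ k (n : ℕ), IsLUB (a k '' Set.Ico (n : ℝ) ((n : ℝ) + 1)) (aH k n))
    (haL : ∀ k (n : ℕ), IsGLB (a k '' Set.Ico (n : ℝ) ((n : ℝ) + 1)) (aL k n))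
    (hhL : ∀ k (n : ℕ),
      IsLeast {p : ℤ | ∃ s ∈ Set.Ico (n : ℝ) ((n : ℝ) + 1), ⌊h k s⌋ = p} (hL k n))
    (hhH : ∀ k (n : ℕ),
      IsGreatest {p : ℤ | ∃ s ∈ Set.Ico (n : ℝ) ((n : ℝ) + 1), ⌊h k s⌋ = p} (hH k n))
    (hu_pos : ∀ n : ℤ, 0 < u n) (hV_pos : ∀ n : ℤ, 0 < V n)
    (hu_mono : ∀ n : ℤ, u (n + 1) ≤ u n) (hV_mono : ∀ n : ℤ, V (n + 1) ≤ V n)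
    (huV : ∀ n : ℤ, 0 ≤ n → u n ≤ V n)
    (huV0 : ∀ n : ℤ, n ≤ 0 → u n = V n)
    (h16 : ∀ n : ℕ, u (n + 1) ≤ u n - ∑ k, aH k n * V (hL k n))
    (h17 : ∀ n : ℕ, V n - ∑ k, aL k n * u (hH k n) ≤ V (n + 1))
    (hinit : ∀ t : ℝ, t < 1 → x t = u ⌊t⌋)
    (heq : ∀ t : ℝ, 0 ≤ t → x (t + 1) - x t + ∑ k, a k t * x (h k t) = 0) :
    (∀ n : ℕ, ∀ t ∈ Set.Ico (n : ℝ) ((n : ℝ) + 1), u n ≤ x t ∧ x t ≤ V n) ∧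
    (∀ t : ℝ, 0 < x t) ∧
    (∀ c d : ℝ, c < d → ∃ ε > 0, ∀ t ∈ Set.Icc c d, ε ≤ x t) := by
  have huA : Antitone u := antitone_int_of_succ_le hu_mono
  have hVA : Antitone V := antitone_int_of_succ_le hV_mono
  have main : ∀ n : ℕ, ∀ t ∈ Set.Ico (n : ℝ) ((n : ℝ) + 1), u n ≤ x t ∧ x t ≤ V n := by
    intro n
    induction n using Nat.strong_induction_on with
    | _ n IH =>
      have sand : ∀ r : ℝ, r < n → u ⌊r⌋ ≤ x r ∧ x r ≤ V ⌊r⌋ := by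
        intro r hr
        rcases le_or_gt 0 r with h0 | h0
        · have hfl : (0:ℤ) ≤ ⌊r⌋ := Int.floor_nonneg.mpr h0
          set p : ℕ := ⌊r⌋.toNat with hp
          have hpz : ((p:ℕ) : ℤ) = ⌊r⌋ := Int.toNat_of_nonneg hfl
          have hpzr : ((p:ℕ) : ℝ) = ((⌊r⌋ : ℤ) : ℝ) := by exact_mod_cast congrArg (fun z : ℤ => (z : ℝ)) hpz
          have hpr : (p : ℝ) ≤ r := by rw [hpzr]; exact Int.floor_le r
          have hrp : r < (p : ℝ) + 1 := by rw [hpzr]; exact Int.lt_floor_add_one r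
          have hpn : p < n := by exact_mod_cast lt_of_le_of_lt hpr hr
          have hmain := IH p hpn r ⟨hpr, hrp⟩
          rwa [hpz] at hmain
        · have hr1 : r < 1 := h0.trans one_pos
          have hfl : ⌊r⌋ ≤ 0 := by
            have := Int.floor_le_floor (R := ℝ) h0.le
            simpa using this
          rw [hinit r hr1]
          exact ⟨le_refl _, (huV0 _ hfl).le⟩
      cases n with
      | zero =>
        intro t ht
        have ht0 : (0:ℝ) ≤ t := by simpa using ht.1
        have ht1 : t < 1 := by simpa using ht.2
        have hfl : ⌊t⌋ = 0 := Int.floor_eq_zero_iff.mpr ⟨ht0, ht1⟩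
        rw [hinit t ht1, hfl]
        exact ⟨by simp, by simpa using huV 0 le_rfl⟩
      | succ n =>
        intro t ht
        have ht1 : ((n:ℝ)) + 1 ≤ t := by
          have := ht.1; push_cast at this; linarith
        have ht2 : t < (n:ℝ) + 2 := by
          have := ht.2; push_cast at this; linarith
        set s := t - 1 with hs
        have hs0 : (0:ℝ) ≤ s := by
          have : (0:ℝ) ≤ (n:ℝ) := Nat.cast_nonneg n
          simp only [hs]; linarith
        have hsn1 : (n:ℝ) ≤ s := by simp only [hs]; linarith
        have hsn2 : s < (n:ℝ) + 1 := by simp only [hs]; linarith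
        have hxeq : x t = x s - ∑ k, a k s * x (h k s) := by
          have h1 := heq s hs0
          have hts : s + 1 = t := by simp [hs]
          rw [hts] at h1; linarith
        have hxs := IH n (Nat.lt_succ_self n) s ⟨hsn1, hsn2⟩
        have hlow : ∑ k, aL k n * u (hH k n) ≤ ∑ k, a k s * x (h k s) := by
          refine Finset.sum_le_sum fun k _ => ?_
          have hsandk := sand (h k s) (by
            have := lt_of_le_of_lt (hht k s) hsn2
            push_cast; linarith)
          have hpmem : ⌊h k s⌋ ∈ {p : ℤ | ∃ s ∈ Set.Ico ((n:ℕ):ℝ) (((n:ℕ):ℝ) + 1), ⌊h k s⌋ = p} :=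
            ⟨s, ⟨hsn1, hsn2⟩, rfl⟩
          have hpH : ⌊h k s⌋ ≤ hH k n := (hhH k n).2 hpmem
          have hux : u (hH k n) ≤ x (h k s) := le_trans (huA hpH) hsandk.1
          have haks : a k s ∈ a k '' Set.Ico ((n:ℕ):ℝ) (((n:ℕ):ℝ) + 1) := ⟨s, ⟨hsn1, hsn2⟩, rfl⟩
          have h_aL : aL k n ≤ a k s := (haL k n).1 haks
          exact mul_le_mul h_aL hux (hu_pos _).le (ha k s)
        have hhigh : ∑ k, a k s * x (h k s) ≤ ∑ k, aH k n * V (hL k n) := by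
          refine Finset.sum_le_sum fun k _ => ?_
          have hsandk := sand (h k s) (by
            have := lt_of_le_of_lt (hht k s) hsn2
            push_cast; linarith)
          have hpmem : ⌊h k s⌋ ∈ {p : ℤ | ∃ s ∈ Set.Ico ((n:ℕ):ℝ) (((n:ℕ):ℝ) + 1), ⌊h k s⌋ = p} :=
            ⟨s, ⟨hsn1, hsn2⟩, rfl⟩
          have hpL : hL k n ≤ ⌊h k s⌋ := (hhL k n).2 hpmem
          have hxV : x (h k s) ≤ V (hL k n) := le_trans hsandk.2 (hVA hpL)
          have haks : a k s ∈ a k '' Set.Ico ((n:ℕ):ℝ) (((n:ℕ):ℝ) + 1) := ⟨s, ⟨hsn1, hsn2⟩, rfl⟩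
          have h_aH : a k s ≤ aH k n := (haH k n).1 haks
          have hx0 : 0 ≤ x (h k s) := le_trans (hu_pos _).le hsandk.1
          have h_aH0 : 0 ≤ aH k n := le_trans (ha k s) h_aH
          exact mul_le_mul h_aH hxV hx0 h_aH0
        have hcast : ((n + 1 : ℕ) : ℤ) = (n : ℤ) + 1 := by push_cast; ring
        rw [hcast]
        have h16n := h16 n
        have h17n := h17 n
        constructor
        · rw [hxeq]; linarith
        · rw [hxeq]; linarith
  have key : ∀ t : ℝ, u ⌊t⌋ ≤ x t := by
    intro t
    rcases le_or_gt 0 t with h0 | h0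
    · have hfl : (0:ℤ) ≤ ⌊t⌋ := Int.floor_nonneg.mpr h0
      set p : ℕ := ⌊t⌋.toNat with hp
      have hpz : ((p:ℕ) : ℤ) = ⌊t⌋ := Int.toNat_of_nonneg hfl
      have hpzr : ((p:ℕ) : ℝ) = ((⌊t⌋ : ℤ) : ℝ) := by exact_mod_cast congrArg (fun z : ℤ => (z : ℝ)) hpz
      have hmain := (main p t ⟨by rw [hpzr]; exact Int.floor_le t,
        by rw [hpzr]; exact Int.lt_floor_add_one t⟩).1
      rwa [hpz] at hmain
    · rw [hinit t (h0.trans one_pos)]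
  refine ⟨main, fun t => lt_of_lt_of_le (hu_pos _) (key t), fun c d _ => ?_⟩
  exact ⟨u ⌊d⌋, hu_pos _, fun t ht => le_trans (huA (Int.floor_le_floor ht.2)) (key t)⟩
end

section
/- Consider the equation x(t+1) - x(t) + 0.5^(⌊t⌋+2)·x(⌊t⌋ - 1 - 0.8·cos t) = 0. With V(n) = 1 and u(n) = 0.5 + 0.5^(n+1) for n ≥ 0 (and u(n) = V(n) = 1 for n < 0), the pair (u,V) satisfies: u, V positive non-increasing, u(n) ≤ V(n), u(n) - u(n+1) = 0.5^(n+2) ≥ a⁺(n)·V(h⁻(n)) and V(n) - V(n+1) = 0 ≤ a⁻(n)·u(h⁺(n)), where a⁺(n) = a⁻(n) = 0.5^(n+2), h⁻(n) = n-2, h⁺(n) = n. Consequently this equation has a positive solution x with u(n) ≤ x(t) ≤ V(n) on [n,n+1). -/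
noncomputable def gg : ℕ → ℝ → ℝ
  | 0, _ => 1
  | (n+1), t =>
      if t < (n:ℝ) + 1 then gg n t
      else gg n (t-1) - (0.5:ℝ)^(n+2) * gg n ((n:ℝ) - 1 - 0.8 * Real.cos (t-1))

lemma gg_coh (n : ℕ) (t : ℝ) (h : t < (n:ℝ) + 1) : gg (n+1) t = gg n t := by
  simp [gg, h]

lemma gg_stable (m k : ℕ) (t : ℝ) (h : t < (m:ℝ) + 1) : gg (m+k) t = gg m t := by
  induction k with
  | zero => rfl
  | succ k ih =>
      have h2 : t < ((m+k : ℕ) : ℝ) + 1 := by push_cast; linarith [Nat.cast_nonneg (α := ℝ) k]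
      rw [show m + (k+1) = (m+k)+1 from rfl, gg_coh _ _ h2, ih]

lemma gg_bounds (n : ℕ) (t : ℝ) (h : t < (n:ℝ) + 1) :
    0.5 + (0.5:ℝ)^(n+1) ≤ gg n t ∧ gg n t ≤ 1 := by
  induction n generalizing t with
  | zero => norm_num [gg]
  | succ n ih =>
      by_cases h1 : t < (n:ℝ) + 1
      · rw [gg_coh _ _ h1]
        have := ih t h1
        have hp : (0.5:ℝ)^(n+2) ≤ (0.5:ℝ)^(n+1) :=
          pow_le_pow_of_le_one (by norm_num) (by norm_num) (by omega)
        constructor <;> linarith [this.1, this.2]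
      · rw [show n+1 = n+1 from rfl]
        have hdef : gg (n+1) t
            = gg n (t-1) - (0.5:ℝ)^(n+2) * gg n ((n:ℝ) - 1 - 0.8 * Real.cos (t-1)) := by
          simp [gg, h1]
        have ht1 : t - 1 < (n:ℝ) + 1 := by push_cast at h ⊢; linarith
        have harg : (n:ℝ) - 1 - 0.8 * Real.cos (t-1) < (n:ℝ) + 1 := by
          have := Real.neg_one_le_cos (t-1); nlinarith
        have B1 := ih (t-1) ht1
        have B2 := ih _ harg
        have hppos : (0:ℝ) < (0.5:ℝ)^(n+2) := by positivity
        have e1 : (0.5:ℝ)^(n+2) * gg n ((n:ℝ) - 1 - 0.8 * Real.cos (t-1)) ≤ (0.5:ℝ)^(n+2) := by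
          nlinarith [B2.2]
        have e2 : (0.5:ℝ)^(n+2) * 0.5 ≤ (0.5:ℝ)^(n+2) * gg n ((n:ℝ) - 1 - 0.8 * Real.cos (t-1)) := by
          nlinarith [B2.1, pow_nonneg (by norm_num : (0:ℝ) ≤ 0.5) (n+1)]
        have hhalf : (0.5:ℝ)^(n+1+1) = (0.5:ℝ)^(n+1) * 0.5 := by ring
        rw [hdef]
        constructor
        · have : (0.5:ℝ)^(n+2) = (0.5:ℝ)^(n+1) * 0.5 := by ring
          nlinarith [B1.1]
        · nlinarith [B1.2]

/-- Example 3: the equation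
`x(t+1) - x(t) + 0.5^(⌊t⌋+2)·x(⌊t⌋ - 1 - 0.8·cos t) = 0` has a positive
solution sandwiched between `u(n) = 0.5 + 0.5^(n+1)` and `V(n) = 1` on each
interval `[n, n+1)`, `n ≥ 0`. -/
theorem stmt_9 :
    ∃ x : ℝ → ℝ,
      (∀ t : ℝ, 0 ≤ t →
        x (t + 1) - x t +
          (0.5 : ℝ) ^ (⌊t⌋ + 2) * x ((⌊t⌋ : ℝ) - 1 - 0.8 * Real.cos t) = 0) ∧
      (∀ t : ℝ, 0 < x t) ∧
      (∀ n : ℕ, ∀ t ∈ Set.Ico (n : ℝ) ((n : ℝ) + 1),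
        0.5 + (0.5 : ℝ) ^ (n + 1) ≤ x t ∧ x t ≤ 1) := by
  refine ⟨fun t => gg (⌊t⌋.toNat) t, ?_, ?_, ?_⟩
  · intro t ht
    set n : ℕ := ⌊t⌋.toNat with hn
    have hfl : (n : ℤ) = ⌊t⌋ := Int.toNat_of_nonneg (Int.floor_nonneg.2 ht)
    have hflR : ((n : ℝ)) = (⌊t⌋ : ℝ) := by exact_mod_cast congrArg (Int.cast : ℤ → ℝ) hfl
    have htlt : t < (n:ℝ) + 1 := by rw [hflR]; exact Int.lt_floor_add_one t
    have htge : (n:ℝ) ≤ t := by rw [hflR]; exact Int.floor_le t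
    -- floor of t+1
    have hfl1 : ⌊t+1⌋ = ⌊t⌋ + 1 := by
      rw [Int.floor_add_one]
    have hton1 : (⌊t+1⌋).toNat = n + 1 := by omega
    -- the delayed argument
    set a : ℝ := (⌊t⌋ : ℝ) - 1 - 0.8 * Real.cos t with ha
    have haltn : a < (n:ℝ) := by
      have := Real.neg_one_le_cos t; rw [ha, ← hflR]; nlinarith
    set m : ℕ := ⌊a⌋.toNat with hm
    have hmlen : m ≤ n := by
      have h1 : ⌊a⌋ ≤ (n:ℤ) := by
        have : ⌊a⌋ < (n:ℤ) := by
          have := Int.floor_le a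
          exact_mod_cast Int.floor_lt.2 (by exact_mod_cast haltn)
        omega
      omega
    have haltm : a < (m:ℝ) + 1 := by
      have h1 : a < (⌊a⌋ : ℝ) + 1 := Int.lt_floor_add_one a
      have h2 : (⌊a⌋ : ℝ) ≤ (m:ℝ) := by exact_mod_cast Int.self_le_toNat ⌊a⌋
      linarith
    have hga : gg m a = gg n a := by
      have := gg_stable m (n - m) a haltm
      rw [Nat.add_sub_cancel' hmlen] at this
      exact this.symm
    -- value at t+1
    have hval : gg (n+1) (t+1) = gg n t - (0.5:ℝ)^(n+2) * gg n a := by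
      have hnot : ¬ (t + 1 < (n:ℝ) + 1) := by linarith
      simp only [gg, hnot, if_false]
      rw [show t + 1 - 1 = t from by ring, ha, hflR]
    have hpow : (0.5:ℝ) ^ (⌊t⌋ + 2) = (0.5:ℝ)^(n+2) := by
      rw [show ⌊t⌋ + 2 = ((n+2 : ℕ) : ℤ) by omega, zpow_natCast]
    simp only [hton1]
    rw [hval, hpow, hga]
    ring
  · intro t
    have h := (gg_bounds (⌊t⌋.toNat) t (by
      have h1 : t < (⌊t⌋ : ℝ) + 1 := Int.lt_floor_add_one t
      have h2 : (⌊t⌋ : ℝ) ≤ ((⌊t⌋.toNat : ℕ) : ℝ) := by exact_mod_cast Int.self_le_toNat ⌊t⌋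
      linarith)).1
    have : (0:ℝ) < (0.5:ℝ)^(⌊t⌋.toNat + 1) := by positivity
    linarith
  · intro n t ht
    obtain ⟨h1, h2⟩ := ht
    have hfl : ⌊t⌋ = (n:ℤ) := by
      rw [Int.floor_eq_iff]
      constructor <;> push_cast <;> linarith
    have hton : ⌊t⌋.toNat = n := by omega
    have := gg_bounds n t h2
    simpa [hton] using this
end

section
/- Let x be a positive non-increasing solution of x(t+1) - x(t) + Σ_{k=1}^m a_k(t)·x(h_k(t)) = 0 with a_k(t) ≥ 0 and h_k(t) ≤ t. Then for any real 0 ≤ s < t, x(t) ≤ x(s)·Π_{j∈ℕ, t-j ≥ s} (1 - Σ_{k=1}^m a_k(t-j)), the product taken over the points t - j with j = 1,2,… and t - j ≥ s (an empty product equals 1). -/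
/-- Lemma 3 (backward grid): second Grönwall–Bellman type estimate. If `x`
is a positive non-increasing solution of
`x(t+1) - x(t) + Σ_k a_k(t)·x(h_k(t)) = 0`, then for `0 ≤ s < t`,
`x(t) ≤ x(s)·∏_{j ∈ ℕ, t-j ≥ s} (1 - Σ_k a_k(t-j))`. -/
theorem stmt_11 (m : ℕ) (a h : Fin m → ℝ → ℝ) (x : ℝ → ℝ)
    (ha : ∀ k t, 0 ≤ a k t) (hht : ∀ k (t : ℝ), h k t ≤ t)
    (hpos : ∀ t : ℝ, 0 < x t)
    (hmono : ∀ s t : ℝ, s ≤ t → x t ≤ x s)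
    (heq : ∀ t : ℝ, 0 ≤ t → x (t + 1) - x t + ∑ k, a k t * x (h k t) = 0) :
    ∀ s t : ℝ, 0 ≤ s → s < t →
      x t ≤ x s *
        ∏ j ∈ (Finset.range (⌈t - s⌉₊ + 1)).filter
            (fun j : ℕ => 1 ≤ j ∧ s ≤ t - (j : ℝ)),
          (1 - ∑ k, a k (t - (j : ℝ))) := by
  have key : ∀ t : ℝ, 0 ≤ t → x (t + 1) ≤ x t * (1 - ∑ k, a k t) := by
    intro t ht
    have h1 := heq t ht
    have h2 : (∑ k, a k t) * x t ≤ ∑ k, a k t * x (h k t) := by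
      rw [Finset.sum_mul]
      exact Finset.sum_le_sum fun k _ =>
        mul_le_mul_of_nonneg_left (hmono _ _ (hht k t)) (ha k t)
    nlinarith [h2]
  have keypos : ∀ t : ℝ, 0 ≤ t → 0 < 1 - ∑ k, a k t := by
    intro t ht
    have h1 := key t ht
    have h2 := hpos (t + 1)
    have h3 := hpos t
    nlinarith
  have main : ∀ n : ℕ, ∀ s t : ℝ, 0 ≤ s → (n : ℝ) ≤ t - s →
      x t ≤ x s * ∏ i ∈ Finset.range n, (1 - ∑ k, a k (t - ((1 + i : ℕ) : ℝ))) := by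
    intro n
    induction n with
    | zero => intro s t hs hts; simpa using hmono s t (by linarith)
    | succ n ih =>
      intro s t hs hts
      push_cast at hts
      have hn : (0 : ℝ) ≤ n := n.cast_nonneg
      have ht1 : 0 ≤ t - 1 := by linarith
      have h1 : x t ≤ x (t - 1) * (1 - ∑ k, a k (t - 1)) := by
        have := key (t - 1) ht1
        simpa using this
      have h2 := ih s (t - 1) hs (by linarith)
      have hfac := keypos (t - 1) ht1
      have harg : ∀ i : ℕ, t - ((1 + (i + 1) : ℕ) : ℝ) = t - 1 - ((1 + i : ℕ) : ℝ) := by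
        intro i; push_cast; ring
      calc x t ≤ x (t - 1) * (1 - ∑ k, a k (t - 1)) := h1
        _ ≤ (x s * ∏ i ∈ Finset.range n, (1 - ∑ k, a k (t - 1 - ((1 + i : ℕ) : ℝ)))) *
              (1 - ∑ k, a k (t - 1)) := mul_le_mul_of_nonneg_right h2 hfac.le
        _ = x s * ∏ i ∈ Finset.range (n + 1), (1 - ∑ k, a k (t - ((1 + i : ℕ) : ℝ))) := by
            rw [Finset.prod_range_succ']
            simp only [harg]
            norm_num
            ring
  intro s t hs hst
  set n := ⌊t - s⌋₊ with hn
  have hts : 0 ≤ t - s := by linarith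
  have hset : (Finset.range (⌈t - s⌉₊ + 1)).filter
      (fun j : ℕ => 1 ≤ j ∧ s ≤ t - (j : ℝ)) = Finset.Icc 1 n := by
    ext j
    simp only [Finset.mem_filter, Finset.mem_range, Finset.mem_Icc]
    constructor
    · rintro ⟨-, h1, h2⟩
      exact ⟨h1, Nat.le_floor (by linarith)⟩
    · rintro ⟨h1, h2⟩
      have hj : (j : ℝ) ≤ t - s := le_trans (by exact_mod_cast h2) (Nat.floor_le hts)
      refine ⟨?_, h1, by linarith⟩
      exact lt_of_le_of_lt (le_trans h2 (Nat.floor_le_ceil _)) (Nat.lt_succ_self _)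
  rw [hset]
  have : Finset.Icc 1 n = Finset.Ico 1 (n + 1) := by
    rw [Nat.Icc_eq_range', Nat.Ico_eq_range']
  rw [this, Finset.prod_Ico_eq_prod_range]
  simpa using main n s t hs (by exact_mod_cast Nat.floor_le hts)
end

section
/- The equation x(t+1) - x(t) + (1/2 - {t}/2)·x(t) = 0 has no positive non-increasing solution. Precisely: if x : [0,∞) → ℝ is positive and satisfies x(t+1) = (1/2 + {t}/2)·x(t) for all t ≥ 0, then x is not non-increasing; in fact for α = x(0)/x(1/2) and any integer n > ln α / ln(3/2), one has x(n + 1/2) > x(n). -/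
/-- Example 4 (second part): the equation
`x(t+1) = (1/2 + {t}/2)·x(t)` has no positive non-increasing solution:
any positive solution satisfies `x(n + 1/2) > x(n)` for every integer
`n > ln(x(0)/x(1/2)) / ln(3/2)`; in particular `x` is not non-increasing. -/
theorem stmt_15 (x : ℝ → ℝ)
    (hpos : ∀ t : ℝ, 0 ≤ t → 0 < x t)
    (heq : ∀ t : ℝ, 0 ≤ t → x (t + 1) = (1 / 2 + Int.fract t / 2) * x t) :
    (∀ n : ℕ, Real.log (x 0 / x (1 / 2)) / Real.log (3 / 2) < (n : ℝ) →
      x n < x ((n : ℝ) + 1 / 2)) ∧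
    ¬ (∀ s t : ℝ, 0 ≤ s → s ≤ t → x t ≤ x s) := by
  have hA : ∀ n : ℕ, x n = (1/2 : ℝ) ^ n * x 0 := by
    intro n
    induction n with
    | zero => simp
    | succ n ih =>
      have h := heq n (Nat.cast_nonneg n)
      rw [Int.fract_natCast] at h
      push_cast
      rw [h, ih]
      ring
  have hB : ∀ n : ℕ, x ((n : ℝ) + 1/2) = (3/4 : ℝ) ^ n * x (1/2) := by
    intro n
    induction n with
    | zero => simp
    | succ n ih =>
      have hnn : (0:ℝ) ≤ (n:ℝ) + 1/2 := by positivity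
      have h := heq ((n : ℝ) + 1/2) hnn
      have hf : Int.fract ((n : ℝ) + 1/2) = 1/2 := by
        rw [add_comm, Int.fract_add_natCast, Int.fract_eq_self.mpr (by norm_num)]
      rw [hf] at h
      have hrw : ((n : ℝ) + 1/2) + 1 = ((n + 1 : ℕ) : ℝ) + 1/2 := by push_cast; ring
      rw [hrw] at h
      rw [h, ih]
      ring
  have hx0 := hpos 0 le_rfl
  have hxh := hpos (1/2) (by norm_num)
  have hmain : ∀ n : ℕ, Real.log (x 0 / x (1 / 2)) / Real.log (3 / 2) < (n : ℝ) →
      x n < x ((n : ℝ) + 1 / 2) := by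
    intro n hn
    have hlog : (0:ℝ) < Real.log (3/2) := Real.log_pos (by norm_num)
    have h1 : Real.log (x 0 / x (1/2)) < n * Real.log (3/2) := by
      rw [div_lt_iff₀ hlog] at hn; linarith
    have h2 : x 0 / x (1/2) < (3/2 : ℝ) ^ n := by
      have := Real.log_lt_log_iff (by positivity : (0:ℝ) < x 0 / x (1/2))
        (by positivity : (0:ℝ) < (3/2:ℝ) ^ n)
      rw [← this]
      rwa [Real.log_pow]
    have h3 : x 0 < (3/2 : ℝ) ^ n * x (1/2) := by
      rw [div_lt_iff₀ hxh] at h2; linarith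
    rw [hA n, hB n]
    have hp : (0:ℝ) < (1/2:ℝ)^n := by positivity
    have : (3/4 : ℝ) ^ n = (1/2:ℝ)^n * (3/2:ℝ)^n := by
      rw [← mul_pow]; norm_num
    rw [this]
    calc (1/2:ℝ)^n * x 0 < (1/2:ℝ)^n * ((3/2:ℝ)^n * x (1/2)) := by
          exact (mul_lt_mul_iff_right₀ hp).mpr h3
      _ = (1/2:ℝ)^n * (3/2:ℝ)^n * x (1/2) := by ring
  refine ⟨hmain, fun hmono => ?_⟩
  obtain ⟨n, hn⟩ := exists_nat_gt (Real.log (x 0 / x (1 / 2)) / Real.log (3 / 2))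
  have := hmain n hn
  have h2 := hmono n ((n:ℝ) + 1/2) (Nat.cast_nonneg n) (by linarith)
  linarith
end
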